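/- Let $\beta > 0$, $Q > 0$, $M \in \mathbb{R}$, and define $f : (0,\infty) \to \mathbb{R}$ by $f(r) = 1 - \frac{2 \beta^2 Q}{3} - \frac{2M}{r} + \frac{4 \beta Q^{3/2}}{3 r} \left(\frac{\pi}{2} - \arctan\frac{r \beta}{\sqrt{Q}}\right) + \frac{2 \beta^4 r^2}{3} \log\left(1 + \frac{Q}{\beta^2 r^2}\right)$. If $R_0 > 0$ satisfies $f(R_0) = 0$ and $f'(R_0) = 0$, then $\frac{1}{2} f''(R_0) = \frac{\beta^2 (2 Q^2 - R_0^2) - Q}{R_0^2 (R_0^2 \beta^2 + Q)}$. Moreover, if in addition $f''(R_0) > 0$, then $Q > \frac{1}{2 \beta^2}$. -/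

import Mathlib

open Real

lemma FH_deriv1 (β s M r : ℝ) (hβ : 0 < β) (hs : 0 < s) (hr : 0 < r) :
    HasDerivAt (fun r => 1 - 2 * β ^ 2 * s ^ 2 / 3 - 2 * M / r
      + 4 * β * (s ^ 2 * s) / (3 * r) * (Real.pi / 2 - Real.arctan (r * β / s))
      + 2 * β ^ 4 * r ^ 2 / 3 * Real.log (1 + s ^ 2 / (β ^ 2 * r ^ 2)))
    (2*M/r^2 - 4*β*s^3/(3*r^2)*(Real.pi/2 - Real.arctan (r*β/s))
      - 4*β^2*s^4/(3*r*(s^2+β^2*r^2)) + 4*β^4*r/3 * Real.log (1 + s^2/(β^2*r^2))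
      - 4*β^4*s^2*r/(3*(β^2*r^2+s^2))) r := by
  have hrne := hr.ne'
  have hsne := hs.ne'
  have hbne := hβ.ne'
  have hD : (0:ℝ) < s^2 + β^2*r^2 := by positivity
  have hy : (0:ℝ) < 1 + s^2/(β^2*r^2) := by positivity
  have h1w : (0:ℝ) < 1 + (r*β/s)^2 := by positivity
  have hinner : HasDerivAt (fun r : ℝ => r * β / s) (1 * β / s) r :=
    ((hasDerivAt_id r).mul_const β).div_const s
  have harc : HasDerivAt (fun r : ℝ => Real.arctan (r * β / s))
      ((1 / (1 + (r*β/s) ^ 2)) * (1 * β / s)) r :=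
    by have := (Real.hasDerivAt_arctan (r*β/s)).comp r hinner; exact this
  have hv : HasDerivAt (fun r : ℝ => Real.pi / 2 - Real.arctan (r * β / s))
      (0 - (1 / (1 + (r*β/s) ^ 2)) * (1 * β / s)) r :=
    (hasDerivAt_const r (Real.pi/2)).sub harc
  have hd3 : HasDerivAt (fun r : ℝ => 3 * r) 3 r := by
    simpa using (hasDerivAt_id r).const_mul (3:ℝ)
  have hu : HasDerivAt (fun r : ℝ => 4 * β * (s ^ 2 * s) / (3 * r))
      ((0 * (3*r) - 4 * β * (s ^ 2 * s) * 3) / (3*r)^2) r :=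
    (hasDerivAt_const r _).div hd3 (by positivity)
  have hA := hu.mul hv
  have hyinner : HasDerivAt (fun r : ℝ => 1 + s ^ 2 / (β ^ 2 * r ^ 2))
      (0 + (0 * (β^2*r^2) - s^2 * (β^2 * (2 * r^1))) / (β^2*r^2)^2) r :=
    (hasDerivAt_const r 1).add ((hasDerivAt_const r _).div
      (((hasDerivAt_pow 2 r)).const_mul (β^2)) (by positivity))
  have hL : HasDerivAt (fun r : ℝ => Real.log (1 + s ^ 2 / (β ^ 2 * r ^ 2)))
      ((1 + s^2/(β^2*r^2))⁻¹ * (0 + (0 * (β^2*r^2) - s^2 * (β^2 * (2 * r^1))) / (β^2*r^2)^2)) r :=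
    by have := (Real.hasDerivAt_log hy.ne').comp r hyinner; exact this
  have hB : HasDerivAt (fun r : ℝ => 2 * β ^ 4 * r ^ 2 / 3 * Real.log (1 + s ^ 2 / (β ^ 2 * r ^ 2)))
      ((2 * β^4 * (↑2 * r^1) / 3) * Real.log (1 + s^2/(β^2*r^2))
        + (2 * β^4 * r^2 / 3) * ((1 + s^2/(β^2*r^2))⁻¹ * (0 + (0 * (β^2*r^2) - s^2 * (β^2 * (2 * r^1))) / (β^2*r^2)^2))) r :=
    (((hasDerivAt_pow 2 r).const_mul (2*β^4)).div_const 3).mul hL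
  have hM : HasDerivAt (fun r : ℝ => 2 * M / r) ((0 * r - 2*M*1)/r^2) r :=
    (hasDerivAt_const r _).div (hasDerivAt_id r) hrne
  have H := (((hasDerivAt_const r (1 - 2 * β ^ 2 * s ^ 2 / 3)).sub hM).add hA).add hB
  convert H using 1
  · rfl
  · rfl
  · rfl
  have e1 : (1:ℝ) + (r*β/s)^2 = (s^2+β^2*r^2)/s^2 := by field_simp
  rw [e1]
  field_simp
  ring

lemma FH_deriv2 (β s M r : ℝ) (hβ : 0 < β) (hs : 0 < s) (hr : 0 < r) :
    HasDerivAt (fun r => 2*M/r^2 - 4*β*s^3/(3*r^2)*(Real.pi/2 - Real.arctan (r*β/s))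
      - 4*β^2*s^4/(3*r*(s^2+β^2*r^2)) + 4*β^4*r/3 * Real.log (1 + s^2/(β^2*r^2))
      - 4*β^4*s^2*r/(3*(β^2*r^2+s^2)))
    (-4*M/r^3 + 8*β*s^3/(3*r^3)*(Real.pi/2 - Real.arctan (r*β/s))
      + 4*β^2*s^4/(3*r^2*(s^2+β^2*r^2)) + 4*β^2*s^4*(s^2+3*β^2*r^2)/(3*r^2*(s^2+β^2*r^2)^2)
      + 4*β^4/3 * Real.log (1 + s^2/(β^2*r^2)) - 8*β^4*s^2/(3*(β^2*r^2+s^2))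
      - 4*β^4*s^2*(s^2-β^2*r^2)/(3*(β^2*r^2+s^2)^2)) r := by
  have hrne := hr.ne'
  have hsne := hs.ne'
  have hbne := hβ.ne'
  have hD : (0:ℝ) < s^2 + β^2*r^2 := by positivity
  have hy : (0:ℝ) < 1 + s^2/(β^2*r^2) := by positivity
  have h1w : (0:ℝ) < 1 + (r*β/s)^2 := by positivity
  have hinner : HasDerivAt (fun r : ℝ => r * β / s) (1 * β / s) r :=
    ((hasDerivAt_id r).mul_const β).div_const s
  have hv : HasDerivAt (fun r : ℝ => Real.pi / 2 - Real.arctan (r * β / s))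
      (0 - (1 / (1 + (r*β/s) ^ 2)) * (1 * β / s)) r :=
    (hasDerivAt_const r (Real.pi/2)).sub (by have := (Real.hasDerivAt_arctan (r*β/s)).comp r hinner; exact this)
  have hyinner : HasDerivAt (fun r : ℝ => 1 + s ^ 2 / (β ^ 2 * r ^ 2))
      (0 + (0 * (β^2*r^2) - s^2 * (β^2 * (2 * r^1))) / (β^2*r^2)^2) r :=
    (hasDerivAt_const r 1).add ((hasDerivAt_const r _).div
      (((hasDerivAt_pow 2 r)).const_mul (β^2)) (by positivity))
  have hL : HasDerivAt (fun r : ℝ => Real.log (1 + s ^ 2 / (β ^ 2 * r ^ 2)))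
      ((1 + s^2/(β^2*r^2))⁻¹ * (0 + (0 * (β^2*r^2) - s^2 * (β^2 * (2 * r^1))) / (β^2*r^2)^2)) r :=
    by have := (Real.hasDerivAt_log hy.ne').comp r hyinner; exact this
  have t1 : HasDerivAt (fun r : ℝ => 2*M/r^2) ((0*r^2 - 2*M*(2*r^1))/(r^2)^2) r :=
    (hasDerivAt_const r _).div (hasDerivAt_pow 2 r) (by positivity)
  have hd2 : HasDerivAt (fun r : ℝ => 3*r^2) (3*(2*r^1)) r :=
    (hasDerivAt_pow 2 r).const_mul 3
  have t2 := ((hasDerivAt_const r (4*β*s^3)).div hd2 (by positivity)).mul hv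
  have hd3 : HasDerivAt (fun r : ℝ => 3 * r) 3 r := by
    simpa using (hasDerivAt_id r).const_mul (3:ℝ)
  have hden3 : HasDerivAt (fun r : ℝ => 3*r*(s^2+β^2*r^2))
      (3*(s^2+β^2*r^2) + 3*r*(0 + β^2*(2*r^1))) r :=
    hd3.mul ((hasDerivAt_const r (s^2)).add ((hasDerivAt_pow 2 r).const_mul (β^2)))
  have t3 : HasDerivAt (fun r : ℝ => 4*β^2*s^4/(3*r*(s^2+β^2*r^2)))
      ((0*(3*r*(s^2+β^2*r^2)) - 4*β^2*s^4*(3*(s^2+β^2*r^2) + 3*r*(0 + β^2*(2*r^1))))/(3*r*(s^2+β^2*r^2))^2) r :=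
    (hasDerivAt_const r _).div hden3 (by positivity)
  have t4 := (((hasDerivAt_id r).const_mul (4*β^4)).div_const 3).mul hL
  have hden5 : HasDerivAt (fun r : ℝ => 3*(β^2*r^2+s^2)) (3*(β^2*(2*r^1)+0)) r :=
    (((hasDerivAt_pow 2 r).const_mul (β^2)).add (hasDerivAt_const r (s^2))).const_mul 3
  have t5 : HasDerivAt (fun r : ℝ => 4*β^4*s^2*r/(3*(β^2*r^2+s^2)))
      ((4*β^4*s^2*1*(3*(β^2*r^2+s^2)) - 4*β^4*s^2*r*(3*(β^2*(2*r^1)+0)))/(3*(β^2*r^2+s^2))^2) r :=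
    ((hasDerivAt_id r).const_mul (4*β^4*s^2)).div hden5 (by positivity)
  have H := (((t1.sub t2).sub t3).add t4).sub t5
  convert H using 1
  · rfl
  · rfl
  · rfl
  have e1 : (1:ℝ) + (r*β/s)^2 = (s^2+β^2*r^2)/s^2 := by field_simp
  rw [e1]
  simp only [Pi.div_apply, id]
  field_simp
  ring

theorem frolovHayward_extremal_horizon
    (β Q M R0 : ℝ) (hβ : 0 < β) (hQ : 0 < Q) (hR0 : 0 < R0) (f : ℝ → ℝ)
    (hf : f = fun r => 1 - 2 * β ^ 2 * Q / 3 - 2 * M / r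
      + 4 * β * (Q * Real.sqrt Q) / (3 * r) * (Real.pi / 2 - Real.arctan (r * β / Real.sqrt Q))
      + 2 * β ^ 4 * r ^ 2 / 3 * Real.log (1 + Q / (β ^ 2 * r ^ 2)))
    (hroot : f R0 = 0) (hroot' : deriv f R0 = 0) :
    (1 / 2) * deriv (deriv f) R0
      = (β ^ 2 * (2 * Q ^ 2 - R0 ^ 2) - Q) / (R0 ^ 2 * (R0 ^ 2 * β ^ 2 + Q)) ∧
    (0 < deriv (deriv f) R0 → Q > 1 / (2 * β ^ 2)) := by
  obtain ⟨s, hs0, rfl⟩ : ∃ s, 0 < s ∧ Q = s ^ 2 :=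
    ⟨Real.sqrt Q, Real.sqrt_pos.mpr hQ, (Real.sq_sqrt hQ.le).symm⟩
  rw [Real.sqrt_sq hs0.le] at hf
  have hrne := hR0.ne'
  have hsne := hs0.ne'
  have hbne := hβ.ne'
  have hD : (0:ℝ) < s^2 + β^2*R0^2 := by positivity
  have hd1 : ∀ r ∈ Set.Ioi (0:ℝ), deriv f r
      = (fun r => 2*M/r^2 - 4*β*s^3/(3*r^2)*(Real.pi/2 - Real.arctan (r*β/s))
        - 4*β^2*s^4/(3*r*(s^2+β^2*r^2)) + 4*β^4*r/3 * Real.log (1 + s^2/(β^2*r^2))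
        - 4*β^4*s^2*r/(3*(β^2*r^2+s^2))) r := by
    intro r hr
    rw [hf]
    exact (FH_deriv1 β s M r hβ hs0 hr).deriv
  have h2 : deriv (deriv f) R0
      = -4*M/R0^3 + 8*β*s^3/(3*R0^3)*(Real.pi/2 - Real.arctan (R0*β/s))
        + 4*β^2*s^4/(3*R0^2*(s^2+β^2*R0^2)) + 4*β^2*s^4*(s^2+3*β^2*R0^2)/(3*R0^2*(s^2+β^2*R0^2)^2)
        + 4*β^4/3 * Real.log (1 + s^2/(β^2*R0^2)) - 8*β^4*s^2/(3*(β^2*R0^2+s^2))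
        - 4*β^4*s^2*(s^2-β^2*R0^2)/(3*(β^2*R0^2+s^2)^2) := by
    have hE : deriv f =ᶠ[nhds R0]
        (fun r => 2*M/r^2 - 4*β*s^3/(3*r^2)*(Real.pi/2 - Real.arctan (r*β/s))
          - 4*β^2*s^4/(3*r*(s^2+β^2*r^2)) + 4*β^4*r/3 * Real.log (1 + s^2/(β^2*r^2))
          - 4*β^4*s^2*r/(3*(β^2*r^2+s^2))) :=
      Filter.eventuallyEq_of_mem (Ioi_mem_nhds hR0) hd1
    rw [hE.deriv_eq]
    exact (FH_deriv2 β s M R0 hβ hs0 hR0).deriv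
  have hroot0 : 1 - 2 * β ^ 2 * s ^ 2 / 3 - 2 * M / R0
      + 4 * β * (s ^ 2 * s) / (3 * R0) * (Real.pi / 2 - Real.arctan (R0 * β / s))
      + 2 * β ^ 4 * R0 ^ 2 / 3 * Real.log (1 + s ^ 2 / (β ^ 2 * R0 ^ 2)) = 0 := by
    rw [hf] at hroot; exact hroot
  have hkey : deriv (deriv f) R0
      = 2*(2*β^2*s^4 - s^2 - β^2*R0^2)/(R0^2*(s^2+β^2*R0^2)) := by
    rw [h2]
    have hcomb : -4*M/R0^3 + 8*β*s^3/(3*R0^3)*(Real.pi/2 - Real.arctan (R0*β/s))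
        + 4*β^2*s^4/(3*R0^2*(s^2+β^2*R0^2)) + 4*β^2*s^4*(s^2+3*β^2*R0^2)/(3*R0^2*(s^2+β^2*R0^2)^2)
        + 4*β^4/3 * Real.log (1 + s^2/(β^2*R0^2)) - 8*β^4*s^2/(3*(β^2*R0^2+s^2))
        - 4*β^4*s^2*(s^2-β^2*R0^2)/(3*(β^2*R0^2+s^2)^2)
        = 2/R0^2 * (1 - 2 * β ^ 2 * s ^ 2 / 3 - 2 * M / R0
          + 4 * β * (s ^ 2 * s) / (3 * R0) * (Real.pi / 2 - Real.arctan (R0 * β / s))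
          + 2 * β ^ 4 * R0 ^ 2 / 3 * Real.log (1 + s ^ 2 / (β ^ 2 * R0 ^ 2)))
          + 2*(2*β^2*s^4 - s^2 - β^2*R0^2)/(R0^2*(s^2+β^2*R0^2)) := by
      field_simp
      ring
    rw [hcomb, hroot0]
    ring
  constructor
  · rw [hkey]
    field_simp
    ring
  · intro hpos
    rw [hkey] at hpos
    have hden : (0:ℝ) < R0^2*(s^2+β^2*R0^2) := by positivity
    have hnum : 0 < 2*(2*β^2*s^4 - s^2 - β^2*R0^2) := by
      rcases div_pos_iff.mp hpos with ⟨h1, _⟩ | ⟨_, h2⟩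
      · exact h1
      · linarith
    rw [gt_iff_lt, div_lt_iff₀ (by positivity)]
    nlinarith [mul_pos hs0 hs0, mul_pos (mul_pos hβ hβ) (mul_pos hR0 hR0)]
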